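/- Let A ∈ ℝ^{m×n} (not necessarily of full rank) and b ∈ ℝ^m with the system Ax = b consistent (i.e., b ∈ Im(A)). Let T = {τ_1, …, τ_d} be a (d, α, β, r, R) row covering of A. Let x_j denote the j-th iterate of the block randomized Kaczmarz method on (A, b) with blocks from T and initial iterate x_0, and set x* = (I − A†A)x_0 + A†b. Then for all j, E‖x_j − x*‖² ≤ (1 − r·σ²_{min+}(A)/(β d))^j ‖x_0 − x*‖², where σ_{min+}(A) is the smallest nonzero singular value of A. -/

import Mathlib

open Matrix

noncomputable section

open Classical in

/-- The Moore–Penrose pseudoinverse of a real matrix, defined via the four Penrose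
conditions (which always admit a unique solution). -/
def mpinv {m n : Type*} [Fintype m] [Fintype n] (A : Matrix m n ℝ) : Matrix n m ℝ :=
  if h : ∃ B : Matrix n m ℝ,
      A * B * A = A ∧ B * A * B = B ∧ (A * B)ᵀ = A * B ∧ (B * A)ᵀ = B * A
  then h.choose else 0

/-- Smallest nonzero eigenvalue of a square real matrix. -/
def lambdaMinPos {k : Type*} [Fintype k] [DecidableEq k] (M : Matrix k k ℝ) : ℝ :=
  sInf {μ : ℝ | μ ≠ 0 ∧ μ ∈ spectrum ℝ M}

/-- Largest eigenvalue of a square real matrix. -/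
def lambdaMax {k : Type*} [Fintype k] [DecidableEq k] (M : Matrix k k ℝ) : ℝ :=
  sSup (spectrum ℝ M)

/-- Squared Euclidean norm of a vector. -/
def sqNorm {k : Type*} [Fintype k] (v : k → ℝ) : ℝ := ∑ i, (v i) ^ 2

/-- The row submatrix of `A` with rows indexed by the subset `τ`. -/
def rowSub {ι κ : Type*} (A : Matrix ι κ ℝ) (τ : Finset ι) : Matrix τ κ ℝ :=
  Matrix.of fun i j => A i.1 j

/-- `T = (τ_1, …, τ_d)` is a `(d, a, β, r, R)` row covering of `A`:
the blocks cover all row indices, `a` lower-bounds the smallest nonzero eigenvalue and `β`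
upper-bounds the largest eigenvalue of each `A_τ A_τᵀ`, and `r` (resp. `R`) is the minimum
(resp. maximum) number of blocks containing any single row. -/
structure IsRowCovering {ι κ : Type*} [Fintype ι] [DecidableEq ι] [Fintype κ] {d : ℕ}
    (A : Matrix ι κ ℝ) (τ : Fin d → Finset ι) (a β : ℝ) (r R : ℕ) : Prop where
  cover : ∀ i : ι, ∃ l, i ∈ τ l
  alpha_le : ∀ l, a ≤ lambdaMinPos (rowSub A (τ l) * (rowSub A (τ l))ᵀ)
  le_beta : ∀ l, lambdaMax (rowSub A (τ l) * (rowSub A (τ l))ᵀ) ≤ β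
  r_le : ∀ i : ι, r ≤ (Finset.univ.filter fun l => i ∈ τ l).card
  r_attained : ∃ i : ι, (Finset.univ.filter fun l => i ∈ τ l).card = r
  le_R : ∀ i : ι, (Finset.univ.filter fun l => i ∈ τ l).card ≤ R
  R_attained : ∃ i : ι, (Finset.univ.filter fun l => i ∈ τ l).card = R

/-- One step of the block Kaczmarz method with block `τ`:
`x ↦ x + A_τ† (b_τ − A_τ x)`. -/
def kaczStep {ι κ : Type*} [Fintype ι] [Fintype κ] (A : Matrix ι κ ℝ) (b : ι → ℝ)
    (τ : Finset ι) (x : κ → ℝ) : κ → ℝ :=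
  x + (mpinv (rowSub A τ)).mulVec (fun i : τ => b i.1 - (rowSub A τ).mulVec x i)

/-- The iterates of the block (randomized) Kaczmarz method, as a function of the sequence
`σ` of block choices: `x_k = x_{k-1} + A_τ† (b_τ − A_τ x_{k-1})` with `τ = τs (σ k)`. -/
def kaczIter {ι κ : Type*} [Fintype ι] [Fintype κ] {d : ℕ} (A : Matrix ι κ ℝ) (b : ι → ℝ)
    (τs : Fin d → Finset ι) (x0 : κ → ℝ) : ∀ k : ℕ, (Fin k → Fin d) → κ → ℝ
  | 0, _ => x0
  | (k + 1), σ => kaczStep A b (τs (σ (Fin.last k))) (kaczIter A b τs x0 k (σ ∘ Fin.castSucc))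

/-- **Theorem (convergence of block randomized Kaczmarz, consistent case).**
If `Ax = b` is consistent and `T` is a `(d, α, β, r, R)` row covering of `A`, then with
`x* = (I − A†A) x_0 + A†b`, the expected squared error of the `j`-th block randomized
Kaczmarz iterate (expectation = average over all uniform i.i.d. block choice sequences)
satisfies `E‖x_j − x*‖² ≤ (1 − r σ²₊(A)/(β d))ʲ ‖x_0 − x*‖²`,
where `σ²₊(A) = λ₊(AᵀA)` is the square of the smallest nonzero singular value. -/

-- ===================== auxiliary lemmas =====================

lemma dot_shift {ι κ : Type*} [Fintype ι] [Fintype κ] (M : Matrix ι κ ℝ) (a : κ → ℝ)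
    (b : ι → ℝ) : (M.mulVec a) ⬝ᵥ b = a ⬝ᵥ (Mᵀ.mulVec b) := by
  simp only [dotProduct, Matrix.mulVec, dotProduct, Matrix.transpose_apply,
    Finset.sum_mul, Finset.mul_sum]
  rw [Finset.sum_comm]
  exact Finset.sum_congr rfl fun i _ => Finset.sum_congr rfl fun j _ => by ring

lemma mat_ext' {ι κ : Type*} [Fintype κ] [DecidableEq κ] {M N : Matrix ι κ ℝ}
    (h : ∀ x, M.mulVec x = N.mulVec x) : M = N := by
  ext i j
  simpa [Matrix.mulVec_single] using congrFun (h (Pi.single j 1)) i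

lemma sq_zero_of_dot {k : Type*} [Fintype k] {v : k → ℝ} (h : v ⬝ᵥ v = 0) : v = 0 := by
  funext i
  have h2 : ∀ j ∈ Finset.univ, 0 ≤ v j * v j := fun j _ => mul_self_nonneg _
  have := (Finset.sum_eq_zero_iff_of_nonneg h2).mp h i (Finset.mem_univ i)
  exact mul_self_eq_zero.mp this

lemma sqNorm_eq_dot {k : Type*} [Fintype k] (v : k → ℝ) : sqNorm v = v ⬝ᵥ v := by
  simp [sqNorm, dotProduct, pow_two]

lemma sqNorm_nonneg {k : Type*} [Fintype k] (v : k → ℝ) : 0 ≤ sqNorm v :=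
  Finset.sum_nonneg fun i _ => sq_nonneg _

lemma sqNorm_eq_zero {k : Type*} [Fintype k] {v : k → ℝ} (h : sqNorm v = 0) : v = 0 := by
  rw [sqNorm_eq_dot] at h
  exact sq_zero_of_dot h

-- ===================== spectra of hermitian matrices =====================

lemma herm_det {k : Type*} [Fintype k] [DecidableEq k] {S : Matrix k k ℝ}
    (hS : S.IsHermitian) (μ : ℝ) :
    (algebraMap ℝ (Matrix k k ℝ) μ - S).det = ∏ i, (μ - hS.eigenvalues i) := by
  set U := (hS.eigenvectorUnitary : Matrix k k ℝ) with hUdef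
  have hUU : U * star U = 1 := (Matrix.mem_unitaryGroup_iff).mp hS.eigenvectorUnitary.2
  have h1 : algebraMap ℝ (Matrix k k ℝ) μ - S
      = U * diagonal (fun i => μ - hS.eigenvalues i) * star U := by
    have h2 : algebraMap ℝ (Matrix k k ℝ) μ = U * diagonal (fun _ => μ) * star U := by
      have hd : (diagonal (fun _ : k => μ)) = μ • (1 : Matrix k k ℝ) := by
        simp [Matrix.smul_eq_diagonal_mul]
      rw [hd, Matrix.mul_smul, Matrix.mul_one, Matrix.smul_mul, hUU,
        Algebra.algebraMap_eq_smul_one]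
    conv_lhs => rw [h2, hS.spectral_theorem, Unitary.conjStarAlgAut_apply]
    rw [← Matrix.sub_mul, ← Matrix.mul_sub, Matrix.diagonal_sub]
    norm_num [Function.comp]
  have hdet1 : U.det * (star U).det = 1 := by rw [← Matrix.det_mul, hUU, Matrix.det_one]
  rw [h1, Matrix.det_mul, Matrix.det_mul, mul_comm, ← mul_assoc, mul_comm (star U).det,
    hdet1, one_mul]
  simp [Matrix.det_diagonal]

theorem herm_spectrum {k : Type*} [Fintype k] [DecidableEq k] {S : Matrix k k ℝ}
    (hS : S.IsHermitian) : spectrum ℝ S = Set.range hS.eigenvalues := by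
  ext μ
  rw [spectrum.mem_iff, Matrix.isUnit_iff_isUnit_det, isUnit_iff_ne_zero, not_not,
    herm_det hS μ, Finset.prod_eq_zero_iff]
  constructor
  · rintro ⟨i, _, h⟩; exact ⟨i, by linarith [sub_eq_zero.mp h]⟩
  · rintro ⟨i, h⟩; exact ⟨i, Finset.mem_univ i, by rw [h, sub_self]⟩

section herm
variable {k : Type*} [Fintype k] [DecidableEq k] {S : Matrix k k ℝ} (hS : S.IsHermitian)
include hS

lemma herm_coords (x : k → ℝ) :
    x ⬝ᵥ S.mulVec x = ∑ i, hS.eigenvalues i *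
      ((star (hS.eigenvectorUnitary : Matrix k k ℝ)).mulVec x i) ^ 2
    ∧ x ⬝ᵥ x = ∑ i, ((star (hS.eigenvectorUnitary : Matrix k k ℝ)).mulVec x i) ^ 2 := by
  set U := (hS.eigenvectorUnitary : Matrix k k ℝ) with hUdef
  have hUU : U * star U = 1 := (Matrix.mem_unitaryGroup_iff).mp hS.eigenvectorUnitary.2
  set y := (star U).mulVec x with hy
  have hstar : Uᵀ = star U := by
    rw [Matrix.star_eq_conjTranspose, Matrix.conjTranspose_eq_transpose_of_trivial]
  have hstar' : (star U)ᵀ = U := by rw [← hstar, Matrix.transpose_transpose]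
  have hxU : ∀ w : k → ℝ, x ⬝ᵥ U.mulVec w = y ⬝ᵥ w := by
    intro w
    rw [dotProduct_comm, dot_shift, hstar, ← hy, dotProduct_comm]
  constructor
  · conv_lhs => rw [hS.spectral_theorem, Unitary.conjStarAlgAut_apply]
    rw [← Matrix.mulVec_mulVec, ← Matrix.mulVec_mulVec, ← hy, hxU]
    simp only [dotProduct, Matrix.mulVec_diagonal, Function.comp_apply,
      RCLike.ofReal_real_eq_id, id_eq]
    exact Finset.sum_congr rfl fun i _ => by ring
  · have h4 : y ⬝ᵥ y = x ⬝ᵥ x := by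
      conv_lhs => rw [hy]
      rw [dot_shift, hstar', Matrix.mulVec_mulVec, hUU, Matrix.one_mulVec]
    rw [← h4]
    simp [dotProduct, pow_two]

lemma eig_le_lambdaMax (i : k) : hS.eigenvalues i ≤ lambdaMax S := by
  apply le_csSup
  · rw [herm_spectrum hS]; exact (Set.finite_range _).bddAbove
  · exact hS.eigenvalues_mem_spectrum_real i

lemma rayleigh_le (x : k → ℝ) : x ⬝ᵥ S.mulVec x ≤ lambdaMax S * (x ⬝ᵥ x) := by
  obtain ⟨h1, h2⟩ := herm_coords hS x
  rw [h1, h2, Finset.mul_sum]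
  exact Finset.sum_le_sum fun i _ =>
    mul_le_mul_of_nonneg_right (eig_le_lambdaMax hS i) (sq_nonneg _)

lemma lambdaMax_nonneg [Nonempty k] (hpsd : ∀ x : k → ℝ, 0 ≤ x ⬝ᵥ S.mulVec x) :
    0 ≤ lambdaMax S := by
  obtain ⟨i⟩ := ‹Nonempty k›
  refine le_trans ?_ (eig_le_lambdaMax hS i)
  rw [hS.eigenvalues_eq]
  have := hpsd (hS.eigenvectorBasis i)
  simpa [dotProduct] using this

lemma rayleigh_ge (x : k → ℝ) (hx : ∀ v : k → ℝ, S.mulVec v = 0 → x ⬝ᵥ v = 0) :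
    lambdaMinPos S * (x ⬝ᵥ x) ≤ x ⬝ᵥ S.mulVec x := by
  obtain ⟨h1, h2⟩ := herm_coords hS x
  rw [h1, h2, Finset.mul_sum]
  refine Finset.sum_le_sum fun i _ => ?_
  by_cases h0 : hS.eigenvalues i = 0
  · have hker := hS.mulVec_eigenvectorBasis i
    rw [h0, zero_smul] at hker
    have hyi : (star (hS.eigenvectorUnitary : Matrix k k ℝ)).mulVec x i = 0 := by
      have := hx _ hker
      rw [dotProduct_comm] at this
      simpa [Matrix.mulVec, dotProduct, Matrix.star_apply, mul_comm] using this
    rw [hyi]; simp [h0]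
  · have hmem : hS.eigenvalues i ∈ {μ : ℝ | μ ≠ 0 ∧ μ ∈ spectrum ℝ S} :=
      ⟨h0, hS.eigenvalues_mem_spectrum_real i⟩
    have hbdd : BddBelow {μ : ℝ | μ ≠ 0 ∧ μ ∈ spectrum ℝ S} := by
      apply BddBelow.mono (fun μ hμ => ?_) ((Set.finite_range hS.eigenvalues).bddBelow)
      rw [← herm_spectrum hS]; exact hμ.2
    exact mul_le_mul_of_nonneg_right (csInf_le hbdd hmem) (sq_nonneg _)

end herm

lemma lambdaMinPos_zero {k : Type*} [Fintype k] [DecidableEq k] :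
    lambdaMinPos (0 : Matrix k k ℝ) = 0 := by
  have h0 : (0 : Matrix k k ℝ).IsHermitian := isHermitian_zero
  have hset : {μ : ℝ | μ ≠ 0 ∧ μ ∈ spectrum ℝ (0 : Matrix k k ℝ)} = ∅ := by
    ext μ
    simp only [Set.mem_setOf_eq, Set.mem_empty_iff_false, iff_false, not_and]
    intro hne hmem
    rw [herm_spectrum h0] at hmem
    obtain ⟨i, hi⟩ := hmem
    rw [h0.eigenvalues_eq] at hi
    simp [Matrix.zero_mulVec, dotProduct_zero] at hi
    exact hne hi.symm
  rw [lambdaMinPos, hset, Real.sInf_empty]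

-- ===================== pseudoinverse existence =====================

section pinvherm
variable {k : Type*} [Fintype k] [DecidableEq k] {S : Matrix k k ℝ}

noncomputable def hermPinv (hS : S.IsHermitian) : Matrix k k ℝ :=
  (hS.eigenvectorUnitary : Matrix k k ℝ)
    * diagonal (fun i => if hS.eigenvalues i = 0 then 0 else (hS.eigenvalues i)⁻¹)
    * star (hS.eigenvectorUnitary : Matrix k k ℝ)

theorem hermPinv_spec (hS : S.IsHermitian) :
    S * hermPinv hS * S = S ∧ hermPinv hS * S * hermPinv hS = hermPinv hS ∧
    (hermPinv hS)ᵀ = hermPinv hS ∧ S * hermPinv hS = hermPinv hS * S := by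
  set U := (hS.eigenvectorUnitary : Matrix k k ℝ) with hUdef
  have hU2 : star U * U = 1 := (Matrix.mem_unitaryGroup_iff').mp hS.eigenvectorUnitary.2
  have key : ∀ f g : k → ℝ, (U * diagonal f * star U) * (U * diagonal g * star U)
      = U * diagonal (fun i => f i * g i) * star U := by
    intro f g
    calc (U * diagonal f * star U) * (U * diagonal g * star U)
        = U * (diagonal f * ((star U * U) * diagonal g)) * star U := by
          simp only [Matrix.mul_assoc]
      _ = U * diagonal (fun i => f i * g i) * star U := by
          rw [hU2, Matrix.one_mul, Matrix.diagonal_mul_diagonal, Matrix.mul_assoc]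
  have hSd : S = U * diagonal (fun i => hS.eigenvalues i) * star U := by
    have := hS.spectral_theorem
    simpa [Function.comp, RCLike.ofReal_real_eq_id] using this
  set f : k → ℝ := fun i => hS.eigenvalues i
  set g : k → ℝ := fun i => if hS.eigenvalues i = 0 then 0 else (hS.eigenvalues i)⁻¹
  have hPd : hermPinv hS = U * diagonal g * star U := rfl
  have hfg : ∀ i, f i * g i * f i = f i := by
    intro i; by_cases h : hS.eigenvalues i = 0 <;> simp [f, g, h] <;> field_simp
  have hgf : ∀ i, g i * f i * g i = g i := by
    intro i; by_cases h : hS.eigenvalues i = 0 <;> simp [f, g, h] <;> field_simp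
  have hcomm : ∀ i, f i * g i = g i * f i := fun i => mul_comm _ _
  have hstarU : (star U)ᵀ = U := by
    rw [Matrix.star_eq_conjTranspose, Matrix.conjTranspose_eq_transpose_of_trivial,
      Matrix.transpose_transpose]
  have hUT : Uᵀ = star U := by
    rw [Matrix.star_eq_conjTranspose, Matrix.conjTranspose_eq_transpose_of_trivial]
  have c1 : (U * diagonal f * star U) * (U * diagonal g * star U) * (U * diagonal f * star U)
      = U * diagonal f * star U := by
    rw [key, key]
    have hd : (fun i => f i * g i * f i) = f := funext hfg
    rw [hd]
  have c2 : (U * diagonal g * star U) * (U * diagonal f * star U) * (U * diagonal g * star U)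
      = U * diagonal g * star U := by
    rw [key, key]
    have hd : (fun i => g i * f i * g i) = g := funext hgf
    rw [hd]
  have c4 : (U * diagonal f * star U) * (U * diagonal g * star U)
      = (U * diagonal g * star U) * (U * diagonal f * star U) := by
    rw [key]
    rw [key]
    have hd : (fun i => f i * g i) = (fun i => g i * f i) := funext hcomm
    rw [hd]
  refine ⟨?_, ?_, ?_, ?_⟩
  · rw [← hSd, ← hPd] at c1; exact c1
  · rw [← hSd, ← hPd] at c2; exact c2
  · rw [hPd, Matrix.transpose_mul, Matrix.transpose_mul, Matrix.diagonal_transpose, hstarU,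
      hUT, Matrix.mul_assoc]
  · rw [← hSd, ← hPd] at c4; exact c4

end pinvherm

theorem penrose_exists {ι κ : Type*} [Fintype ι] [Fintype κ] (A : Matrix ι κ ℝ) :
    ∃ B : Matrix κ ι ℝ,
      A * B * A = A ∧ B * A * B = B ∧ (A * B)ᵀ = A * B ∧ (B * A)ᵀ = B * A := by
  classical
  have hS : (Aᵀ * A).IsHermitian := by
    have := Matrix.isHermitian_conjTranspose_mul_self A
    simpa [Matrix.conjTranspose_eq_transpose_of_trivial] using this
  obtain ⟨h1, h2, h3, h4⟩ := hermPinv_spec hS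
  set P := hermPinv hS with hPdef
  have hAPS : A * P * (Aᵀ * A) = A := by
    apply mat_ext'
    intro x
    set y := x - (P * (Aᵀ * A)).mulVec x with hy
    have hSy : (Aᵀ * A).mulVec y = 0 := by
      rw [hy, Matrix.mulVec_sub, Matrix.mulVec_mulVec, sub_eq_zero]
      have h5 : Aᵀ * A * (P * (Aᵀ * A)) = Aᵀ * A := by rw [← Matrix.mul_assoc, h1]
      rw [h5]
    have hAy : A.mulVec y = 0 := by
      apply sq_zero_of_dot
      rw [dot_shift, Matrix.mulVec_mulVec, hSy, dotProduct_zero]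
    have h6 : A.mulVec x - A.mulVec ((P * (Aᵀ * A)).mulVec x) = 0 := by
      rw [← Matrix.mulVec_sub, ← hy, hAy]
    have h7 := sub_eq_zero.mp h6
    rw [Matrix.mulVec_mulVec, ← Matrix.mul_assoc] at h7
    exact h7.symm
  refine ⟨P * Aᵀ, ?_, ?_, ?_, ?_⟩
  · simp only [← Matrix.mul_assoc]
    simp only [← Matrix.mul_assoc] at hAPS
    exact hAPS
  · simp only [← Matrix.mul_assoc]
    simp only [← Matrix.mul_assoc] at h2
    rw [h2]
  · simp only [Matrix.transpose_mul, Matrix.transpose_transpose, h3, ← Matrix.mul_assoc]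
  · simp only [Matrix.transpose_mul, Matrix.transpose_transpose, h3, ← Matrix.mul_assoc]
    simp only [← Matrix.mul_assoc] at h4
    exact h4

theorem mpinv_spec {ι κ : Type*} [Fintype ι] [Fintype κ] (A : Matrix ι κ ℝ) :
    A * mpinv A * A = A ∧ mpinv A * A * mpinv A = mpinv A ∧
    (A * mpinv A)ᵀ = A * mpinv A ∧ (mpinv A * A)ᵀ = mpinv A * A := by
  have h := penrose_exists A
  rw [mpinv, dif_pos h]
  exact h.choose_spec

-- ===================== projection lemmas =====================

lemma mp_proj_symm {ι κ : Type*} [Fintype ι] [Fintype κ] (A : Matrix ι κ ℝ) :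
    (mpinv A * A)ᵀ = mpinv A * A := (mpinv_spec A).2.2.2

lemma mp_proj_idem {ι κ : Type*} [Fintype ι] [Fintype κ] (A : Matrix ι κ ℝ) :
    (mpinv A * A) * (mpinv A * A) = mpinv A * A := by
  obtain ⟨h1, h2, h3, h4⟩ := mpinv_spec A
  calc (mpinv A * A) * (mpinv A * A) = (mpinv A * A * mpinv A) * A := by
        rw [Matrix.mul_assoc (mpinv A * A) (mpinv A) A]
  _ = mpinv A * A := by rw [h2]

lemma mp_A_mul_proj {ι κ : Type*} [Fintype ι] [Fintype κ] (A : Matrix ι κ ℝ) :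
    A * (mpinv A * A) = A := by
  rw [← Matrix.mul_assoc]
  exact (mpinv_spec A).1

lemma proj_pyth {κ : Type*} [Fintype κ] {P : Matrix κ κ ℝ} (hs : Pᵀ = P) (hi : P * P = P)
    (e : κ → ℝ) : sqNorm (e - P.mulVec e) = sqNorm e - sqNorm (P.mulVec e) := by
  have key : (P.mulVec e) ⬝ᵥ (P.mulVec e) = e ⬝ᵥ (P.mulVec e) := by
    rw [dotProduct_comm, dot_shift, hs, Matrix.mulVec_mulVec, hi, dotProduct_comm]
  have hc : (P.mulVec e) ⬝ᵥ e = e ⬝ᵥ (P.mulVec e) := dotProduct_comm _ _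
  simp only [sqNorm_eq_dot]
  rw [sub_dotProduct, dotProduct_sub, dotProduct_sub]
  linarith [key, hc]

-- operator norm bound via lambdaMax
lemma sqNorm_mulVec_le {ι κ : Type*} [Fintype ι] [Fintype κ] [DecidableEq ι] [Nonempty ι]
    (M : Matrix ι κ ℝ) (x : κ → ℝ) :
    sqNorm (M.mulVec x) ≤ lambdaMax (M * Mᵀ) * sqNorm x := by
  have hH : (M * Mᵀ).IsHermitian := by
    have := Matrix.isHermitian_mul_conjTranspose_self M
    simpa [Matrix.conjTranspose_eq_transpose_of_trivial] using this
  have hpsd : ∀ y : ι → ℝ, 0 ≤ y ⬝ᵥ (M * Mᵀ).mulVec y := by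
    intro y
    rw [← Matrix.mulVec_mulVec, dotProduct_comm, dot_shift]
    exact Finset.sum_nonneg fun i _ => mul_self_nonneg _
  have hmax : 0 ≤ lambdaMax (M * Mᵀ) := lambdaMax_nonneg hH hpsd
  set z := M.mulVec x with hz
  set w := Mᵀ.mulVec z with hw
  have h1 : sqNorm z = x ⬝ᵥ w := by
    rw [sqNorm_eq_dot, hz]
    conv_lhs => rw [dot_shift]
  have h2 : w ⬝ᵥ w = z ⬝ᵥ (M * Mᵀ).mulVec z := by
    conv_lhs => rw [hw, dot_shift, Matrix.transpose_transpose, Matrix.mulVec_mulVec]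
  have h3 : w ⬝ᵥ w ≤ lambdaMax (M * Mᵀ) * (z ⬝ᵥ z) := by
    rw [h2]; exact rayleigh_le hH z
  have hcs : (x ⬝ᵥ w) ^ 2 ≤ (x ⬝ᵥ x) * (w ⬝ᵥ w) := by
    simpa [dotProduct, pow_two] using
      Finset.sum_mul_sq_le_sq_mul_sq Finset.univ x w
  by_cases h0 : sqNorm z = 0
  · rw [h0]; exact mul_nonneg hmax (sqNorm_nonneg x)
  · have hzpos : 0 < sqNorm z := lt_of_le_of_ne (sqNorm_nonneg z) (Ne.symm h0)
    have hzz : sqNorm z = z ⬝ᵥ z := sqNorm_eq_dot z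
    have hxx : sqNorm x = x ⬝ᵥ x := sqNorm_eq_dot x
    have key : sqNorm z * sqNorm z ≤ (lambdaMax (M * Mᵀ) * sqNorm x) * sqNorm z := by
      calc sqNorm z * sqNorm z = (x ⬝ᵥ w) ^ 2 := by rw [h1]; ring
      _ ≤ (x ⬝ᵥ x) * (w ⬝ᵥ w) := hcs
      _ ≤ (x ⬝ᵥ x) * (lambdaMax (M * Mᵀ) * (z ⬝ᵥ z)) := by
          apply mul_le_mul_of_nonneg_left h3
          rw [← hxx]; exact sqNorm_nonneg x
      _ = (lambdaMax (M * Mᵀ) * sqNorm x) * sqNorm z := by rw [← hxx, ← hzz]; ring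
    exact le_of_mul_le_mul_right key hzpos

-- rowSub lemmas
lemma rowSub_mulVec {ι κ : Type*} [Fintype ι] [Fintype κ] (A : Matrix ι κ ℝ) (τ : Finset ι)
    (x : κ → ℝ) (i : τ) : (rowSub A τ).mulVec x i = A.mulVec x i.1 := rfl

lemma rowSub_mul {ι κ κ' : Type*} [Fintype ι] [Fintype κ] [Fintype κ']
    (A : Matrix ι κ ℝ) (τ : Finset ι) (M : Matrix κ κ' ℝ) :
    rowSub A τ * M = rowSub (A * M) τ := by
  ext i j
  simp [rowSub, Matrix.mul_apply]

theorem block_randomized_kaczmarz_convergence_consistent {m n d : ℕ}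
    (A : Matrix (Fin m) (Fin n) ℝ) (b : Fin m → ℝ)
    (hconsistent : ∃ x : Fin n → ℝ, A.mulVec x = b)
    (α β : ℝ) (r R : ℕ) (τs : Fin d → Finset (Fin m))
    (hcov : IsRowCovering A τs α β r R)
    (x0 xstar : Fin n → ℝ)
    (hxstar : xstar = (x0 - (mpinv A).mulVec (A.mulVec x0)) + (mpinv A).mulVec b) :
    ∀ j : ℕ,
      (∑ σ : Fin j → Fin d, sqNorm (kaczIter A b τs x0 j σ - xstar)) / (d : ℝ) ^ j ≤
        (1 - (r : ℝ) * lambdaMinPos (Aᵀ * A) / (β * d)) ^ j * sqNorm (x0 - xstar) := by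
  classical
  obtain ⟨hA1, hA2, hA3, hA4⟩ := mpinv_spec A
  set c : ℝ := (r : ℝ) * lambdaMinPos (Aᵀ * A) / (β * (d : ℝ)) with hc
  -- A xstar = b
  have hb : A.mulVec xstar = b := by
    obtain ⟨xs, hxs⟩ := hconsistent
    have h1 : A.mulVec ((mpinv A).mulVec b) = b := by
      rw [← hxs, Matrix.mulVec_mulVec, Matrix.mulVec_mulVec, hA1, hxs]
    have h2 : A.mulVec ((mpinv A).mulVec (A.mulVec x0)) = A.mulVec x0 := by
      rw [Matrix.mulVec_mulVec, Matrix.mulVec_mulVec, hA1]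
    rw [hxstar, Matrix.mulVec_add, Matrix.mulVec_sub, h1, h2, sub_self, zero_add]
  -- invariant at step 0
  have he0 : (mpinv A * A).mulVec (x0 - xstar) = x0 - xstar := by
    have hx0 : x0 - xstar = (mpinv A * A).mulVec x0 - (mpinv A).mulVec b := by
      have h3 : (mpinv A).mulVec (A.mulVec x0) = (mpinv A * A).mulVec x0 := by
        rw [Matrix.mulVec_mulVec]
      rw [hxstar, ← h3]; abel
    rw [hx0, Matrix.mulVec_sub, Matrix.mulVec_mulVec, Matrix.mulVec_mulVec,
      mp_proj_idem, hA2, ← hx0]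
  -- step error formula
  have hstep_err : ∀ (τ : Finset (Fin m)) (x : Fin n → ℝ),
      kaczStep A b τ x - xstar
        = (x - xstar) - (mpinv (rowSub A τ) * rowSub A τ).mulVec (x - xstar) := by
    intro τ x
    have hv : (fun i : ↥τ => b i.1 - (rowSub A τ).mulVec x i)
        = (rowSub A τ).mulVec (xstar - x) := by
      funext i
      rw [← hb]
      simp [Matrix.mulVec_sub, rowSub_mulVec, Pi.sub_apply]
    have hneg : (mpinv (rowSub A τ) * rowSub A τ).mulVec (xstar - x)
        = -((mpinv (rowSub A τ) * rowSub A τ).mulVec (x - xstar)) := by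
      rw [← Matrix.mulVec_neg, neg_sub]
    simp only [kaczStep, hv, Matrix.mulVec_mulVec]
    rw [hneg]; abel
  -- invariant propagation
  have hinv_prop : ∀ (τ : Finset (Fin m)) (e : Fin n → ℝ),
      (mpinv A * A).mulVec e = e →
      (mpinv A * A).mulVec (e - (mpinv (rowSub A τ) * rowSub A τ).mulVec e)
        = e - (mpinv (rowSub A τ) * rowSub A τ).mulVec e := by
    intro τ e he
    have hl : rowSub A τ * (mpinv A * A) = rowSub A τ := by
      rw [rowSub_mul, mp_A_mul_proj]
    have t1 : (mpinv (rowSub A τ) * rowSub A τ) * (mpinv A * A)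
        = mpinv (rowSub A τ) * rowSub A τ := by
      rw [Matrix.mul_assoc, hl]
    have t2 : (mpinv A * A) * (mpinv (rowSub A τ) * rowSub A τ)
        = mpinv (rowSub A τ) * rowSub A τ := by
      have h5 := congrArg Matrix.transpose t1
      rw [Matrix.transpose_mul, mp_proj_symm, mp_proj_symm] at h5
      exact h5
    rw [Matrix.mulVec_sub, he, Matrix.mulVec_mulVec, t2]
  -- the one-step bound
  have hstep : ∀ e : Fin n → ℝ, (mpinv A * A).mulVec e = e →
      ∑ l : Fin d, sqNorm
          (e - (mpinv (rowSub A (τs l)) * rowSub A (τs l)).mulVec e)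
        ≤ (1 - c) * ((d : ℝ) * sqNorm e) := by
    have hHA : (Aᵀ * A).IsHermitian := by
      have := Matrix.isHermitian_conjTranspose_mul_self A
      simpa [Matrix.conjTranspose_eq_transpose_of_trivial] using this
    by_cases hA0 : A = 0
    · have hz : ∀ l, (mpinv (rowSub A (τs l)) * rowSub A (τs l)) = 0 := by
        intro l
        have hrs : rowSub A (τs l) = 0 := by
          ext i k; simp [rowSub, hA0]
        rw [hrs, Matrix.mul_zero]
      have hlmp : lambdaMinPos (Aᵀ * A) = 0 := by
        rw [hA0, Matrix.mul_zero]
        exact lambdaMinPos_zero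
      have hc0 : c = 0 := by rw [hc, hlmp]; simp
      intro e he
      simp only [hz, Matrix.zero_mulVec, sub_zero, hc0]
      rw [Finset.sum_const, Finset.card_univ, Fintype.card_fin, nsmul_eq_mul]
      simp
    · obtain ⟨i0, j0, hij⟩ : ∃ i j, A i j ≠ 0 := by
        by_contra h; push_neg at h; exact hA0 (by ext i j; simpa using h i j)
      obtain ⟨l0, hl0⟩ := hcov.cover i0
      have hd0 : 0 < d := l0.pos
      have hdR : (0:ℝ) < (d:ℝ) := by exact_mod_cast hd0
      have hβ : 0 < β := by
        have hne : Nonempty ↥(τs l0) := ⟨⟨i0, hl0⟩⟩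
        have hH : (rowSub A (τs l0) * (rowSub A (τs l0))ᵀ).IsHermitian := by
          have := Matrix.isHermitian_mul_conjTranspose_self (rowSub A (τs l0))
          simpa [Matrix.conjTranspose_eq_transpose_of_trivial] using this
        set x1 : ↥(τs l0) → ℝ := Pi.single ⟨i0, hl0⟩ 1 with hx1
        have hray := rayleigh_le hH x1
        have hxx : x1 ⬝ᵥ x1 = 1 := by simp [hx1, single_dotProduct]
        have hxS : x1 ⬝ᵥ (rowSub A (τs l0) * (rowSub A (τs l0))ᵀ).mulVec x1
            = ∑ jj, A i0 jj * A i0 jj := by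
          simp [hx1, Matrix.mulVec_single, single_dotProduct, Matrix.mul_apply,
            rowSub, Matrix.transpose_apply]
        have hpos : 0 < ∑ jj, A i0 jj * A i0 jj :=
          Finset.sum_pos' (fun jj _ => mul_self_nonneg _)
            ⟨j0, Finset.mem_univ j0, mul_self_pos.mpr hij⟩
        have hlam : (0:ℝ) < lambdaMax (rowSub A (τs l0) * (rowSub A (τs l0))ᵀ) := by
          rw [hxS, hxx, mul_one] at hray; linarith
        linarith [hcov.le_beta l0]
      intro e he
      have hker : ∀ v : Fin n → ℝ, (Aᵀ * A).mulVec v = 0 → e ⬝ᵥ v = 0 := by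
        intro v hv
        have hAv : A.mulVec v = 0 := by
          apply sq_zero_of_dot
          rw [dot_shift, Matrix.mulVec_mulVec, hv, dotProduct_zero]
        have hPv : (mpinv A * A).mulVec v = 0 := by
          rw [← Matrix.mulVec_mulVec, hAv, Matrix.mulVec_zero]
        calc e ⬝ᵥ v = (mpinv A * A).mulVec e ⬝ᵥ v := by rw [he]
          _ = e ⬝ᵥ ((mpinv A * A)ᵀ.mulVec v) := by rw [dot_shift]
          _ = 0 := by rw [mp_proj_symm, hPv, dotProduct_zero]
      have hrayA := rayleigh_ge hHA e hker
      have hsqA : sqNorm (A.mulVec e) = e ⬝ᵥ (Aᵀ * A).mulVec e := by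
        rw [sqNorm_eq_dot, dot_shift, Matrix.mulVec_mulVec]
      have ha : ∀ l, sqNorm ((rowSub A (τs l)).mulVec e)
          ≤ β * sqNorm ((mpinv (rowSub A (τs l)) * rowSub A (τs l)).mulVec e) := by
        intro l
        have hAl : rowSub A (τs l) * (mpinv (rowSub A (τs l)) * rowSub A (τs l))
            = rowSub A (τs l) := mp_A_mul_proj _
        have heq : (rowSub A (τs l)).mulVec e
            = (rowSub A (τs l)).mulVec
                ((mpinv (rowSub A (τs l)) * rowSub A (τs l)).mulVec e) := by
          rw [Matrix.mulVec_mulVec, hAl]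
        rw [heq]
        rcases isEmpty_or_nonempty ↥(τs l) with hEm | hNE
        · have hzero : sqNorm ((rowSub A (τs l)).mulVec
              ((mpinv (rowSub A (τs l)) * rowSub A (τs l)).mulVec e)) = 0 := by
            simp [sqNorm]
          rw [hzero]
          exact mul_nonneg hβ.le (sqNorm_nonneg _)
        · calc sqNorm ((rowSub A (τs l)).mulVec
                ((mpinv (rowSub A (τs l)) * rowSub A (τs l)).mulVec e))
              ≤ lambdaMax (rowSub A (τs l) * (rowSub A (τs l))ᵀ)
                * sqNorm ((mpinv (rowSub A (τs l)) * rowSub A (τs l)).mulVec e) :=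
              sqNorm_mulVec_le _ _
          _ ≤ β * sqNorm ((mpinv (rowSub A (τs l)) * rowSub A (τs l)).mulVec e) :=
              mul_le_mul_of_nonneg_right (hcov.le_beta l) (sqNorm_nonneg _)
      have hbcount : (r:ℝ) * sqNorm (A.mulVec e)
          ≤ ∑ l, sqNorm ((rowSub A (τs l)).mulVec e) := by
        have h1 : ∀ l, sqNorm ((rowSub A (τs l)).mulVec e)
            = ∑ i ∈ τs l, ((A.mulVec e) i)^2 := by
          intro l
          rw [sqNorm, ← Finset.sum_coe_sort (τs l) (fun i => ((A.mulVec e) i)^2)]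
          exact Finset.sum_congr rfl fun i _ => by rw [rowSub_mulVec]
        calc (r:ℝ) * sqNorm (A.mulVec e)
            = ∑ i : Fin m, (r:ℝ) * ((A.mulVec e) i)^2 := by rw [sqNorm, Finset.mul_sum]
          _ ≤ ∑ i : Fin m, ((Finset.univ.filter fun l => i ∈ τs l).card : ℝ)
                * ((A.mulVec e) i)^2 := by
              apply Finset.sum_le_sum; intro i _
              exact mul_le_mul_of_nonneg_right
                (by exact_mod_cast hcov.r_le i) (sq_nonneg _)
          _ = ∑ i : Fin m, ∑ l : Fin d, (if i ∈ τs l then ((A.mulVec e) i)^2 else 0) := by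
              apply Finset.sum_congr rfl; intro i _
              rw [Finset.sum_ite, Finset.sum_const, Finset.sum_const_zero, add_zero,
                nsmul_eq_mul]
          _ = ∑ l : Fin d, ∑ i : Fin m, (if i ∈ τs l then ((A.mulVec e) i)^2 else 0) :=
              Finset.sum_comm
          _ = ∑ l, sqNorm ((rowSub A (τs l)).mulVec e) := by
              apply Finset.sum_congr rfl; intro l _
              rw [Finset.sum_ite_mem, Finset.univ_inter, h1 l]
      have hcomb : (r:ℝ) * (lambdaMinPos (Aᵀ * A) * sqNorm e)
          ≤ β * ∑ l, sqNorm ((mpinv (rowSub A (τs l)) * rowSub A (τs l)).mulVec e) := by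
        calc (r:ℝ) * (lambdaMinPos (Aᵀ*A) * sqNorm e)
            ≤ (r:ℝ) * sqNorm (A.mulVec e) := by
              apply mul_le_mul_of_nonneg_left _ (Nat.cast_nonneg r)
              rw [hsqA, sqNorm_eq_dot]
              exact hrayA
          _ ≤ ∑ l, sqNorm ((rowSub A (τs l)).mulVec e) := hbcount
          _ ≤ ∑ l, β * sqNorm ((mpinv (rowSub A (τs l)) * rowSub A (τs l)).mulVec e) :=
              Finset.sum_le_sum fun l _ => ha l
          _ = β * ∑ l, sqNorm ((mpinv (rowSub A (τs l)) * rowSub A (τs l)).mulVec e) := by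
              rw [Finset.mul_sum]
      have hpyth : ∀ l, sqNorm (e - (mpinv (rowSub A (τs l)) * rowSub A (τs l)).mulVec e)
          = sqNorm e - sqNorm ((mpinv (rowSub A (τs l)) * rowSub A (τs l)).mulVec e) :=
        fun l => proj_pyth (mp_proj_symm _) (mp_proj_idem _) e
      have hsplit : ∑ l, sqNorm (e - (mpinv (rowSub A (τs l)) * rowSub A (τs l)).mulVec e)
          = (d:ℝ) * sqNorm e
            - ∑ l, sqNorm ((mpinv (rowSub A (τs l)) * rowSub A (τs l)).mulVec e) := by
        simp only [hpyth]
        rw [Finset.sum_sub_distrib, Finset.sum_const, Finset.card_univ, Fintype.card_fin,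
          nsmul_eq_mul]
      rw [hsplit]
      have hgoal : (1 - c) * ((d:ℝ) * sqNorm e)
          = (d:ℝ) * sqNorm e - (r:ℝ) * (lambdaMinPos (Aᵀ*A) * sqNorm e) / β := by
        rw [hc]; field_simp
      rw [hgoal]
      have hfinal : (r:ℝ) * (lambdaMinPos (Aᵀ*A) * sqNorm e) / β
          ≤ ∑ l, sqNorm ((mpinv (rowSub A (τs l)) * rowSub A (τs l)).mulVec e) := by
        rw [div_le_iff₀ hβ]
        linarith [hcomb]
      linarith
  have hfac : 0 ≤ 1 - c := by
    by_cases hA0 : A = 0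
    · have hlmp : lambdaMinPos (Aᵀ * A) = 0 := by
        rw [hA0, Matrix.mul_zero]
        exact lambdaMinPos_zero
      rw [hc, hlmp]
      norm_num
    · have hPne : mpinv A * A ≠ 0 := by
        intro h
        apply hA0
        rw [← mp_A_mul_proj A, h, Matrix.mul_zero]
      obtain ⟨i1, j1, h11⟩ : ∃ i j, (mpinv A * A) i j ≠ 0 := by
        by_contra h; push_neg at h; exact hPne (by ext i j; simpa using h i j)
      set e1 : Fin n → ℝ := (mpinv A * A).mulVec (Pi.single j1 1) with he1def
      have he1 : (mpinv A * A).mulVec e1 = e1 := by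
        rw [he1def, Matrix.mulVec_mulVec, mp_proj_idem]
      have hne : e1 ≠ 0 := by
        intro h
        have h0 : e1 i1 = 0 := by rw [h]; rfl
        rw [he1def] at h0
        simp [Matrix.mulVec_single] at h0
        exact h11 h0
      have hpos : 0 < sqNorm e1 :=
        lt_of_le_of_ne (sqNorm_nonneg e1) (fun h => hne (sqNorm_eq_zero h.symm))
      have hsum0 : 0 ≤ ∑ l : Fin d,
          sqNorm (e1 - (mpinv (rowSub A (τs l)) * rowSub A (τs l)).mulVec e1) :=
        Finset.sum_nonneg fun l _ => sqNorm_nonneg _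
      have hub := hstep e1 he1
      obtain ⟨i0, j0, hij⟩ : ∃ i j, A i j ≠ 0 := by
        by_contra h; push_neg at h; exact hA0 (by ext i j; simpa using h i j)
      obtain ⟨l0, hl0⟩ := hcov.cover i0
      have hdR : (0:ℝ) < (d:ℝ) := by exact_mod_cast l0.pos
      nlinarith [mul_pos hdR hpos]
  -- sum decomposition
  have hiter : ∀ (j : ℕ) (σ' : Fin j → Fin d) (l : Fin d),
      kaczIter A b τs x0 (j+1) (Fin.insertNth (Fin.last j) l σ')
        = kaczStep A b (τs l) (kaczIter A b τs x0 j σ') := by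
    intro j σ' l
    set σ : Fin (j+1) → Fin d := Fin.insertNth (Fin.last j) l σ' with hσ
    have h0 : kaczIter A b τs x0 (j+1) σ
        = kaczStep A b (τs (σ (Fin.last j))) (kaczIter A b τs x0 j (σ ∘ Fin.castSucc)) := rfl
    have hlast : σ (Fin.last j) = l := by rw [hσ]; exact Fin.insertNth_apply_same _ _ _
    have hcomp : σ ∘ Fin.castSucc = σ' := by
      funext t
      simp only [Function.comp_apply, hσ]
      rw [← Fin.succAbove_last, Fin.insertNth_apply_succAbove]
    rw [h0, hlast, hcomp]
  have hsum : ∀ (j : ℕ) (F : (Fin (j+1) → Fin d) → ℝ),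
      ∑ σ : Fin (j+1) → Fin d, F σ
        = ∑ l : Fin d, ∑ σ' : Fin j → Fin d, F (Fin.insertNth (Fin.last j) l σ') := by
    intro j F
    rw [← Equiv.sum_comp (Fin.insertNthEquiv (fun _ => Fin d) (Fin.last j)) F]
    rw [Fintype.sum_prod_type]
    apply Finset.sum_congr rfl; intro l _
    apply Finset.sum_congr rfl; intro σ' _
    congr 1
  -- the main induction
  have main : ∀ j : ℕ,
      (∀ σ : Fin j → Fin d,
        (mpinv A * A).mulVec (kaczIter A b τs x0 j σ - xstar)
          = kaczIter A b τs x0 j σ - xstar) ∧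
      (∑ σ : Fin j → Fin d, sqNorm (kaczIter A b τs x0 j σ - xstar))
        ≤ ((1 - c) * (d : ℝ)) ^ j * sqNorm (x0 - xstar) := by
    intro j
    induction j with
    | zero =>
      constructor
      · intro σ; exact he0
      · simp [kaczIter]
    | succ j ih =>
      obtain ⟨ih1, ih2⟩ := ih
      constructor
      · intro σ
        have hd1 : kaczIter A b τs x0 (j+1) σ
            = kaczStep A b (τs (σ (Fin.last j))) (kaczIter A b τs x0 j (σ ∘ Fin.castSucc)) := rfl
        rw [hd1, hstep_err]
        exact hinv_prop _ _ (ih1 (σ ∘ Fin.castSucc))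
      · rw [hsum j (fun σ => sqNorm (kaczIter A b τs x0 (j+1) σ - xstar))]
        have hrw : ∀ l σ', sqNorm (kaczIter A b τs x0 (j+1) (Fin.insertNth (Fin.last j) l σ') - xstar)
            = sqNorm ((kaczIter A b τs x0 j σ' - xstar)
              - (mpinv (rowSub A (τs l)) * rowSub A (τs l)).mulVec
                  (kaczIter A b τs x0 j σ' - xstar)) := by
          intro l σ'
          rw [hiter j σ' l, hstep_err]
        calc ∑ l : Fin d, ∑ σ' : Fin j → Fin d,
              sqNorm (kaczIter A b τs x0 (j+1) (Fin.insertNth (Fin.last j) l σ') - xstar)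
            = ∑ σ' : Fin j → Fin d, ∑ l : Fin d,
              sqNorm ((kaczIter A b τs x0 j σ' - xstar)
                - (mpinv (rowSub A (τs l)) * rowSub A (τs l)).mulVec
                    (kaczIter A b τs x0 j σ' - xstar)) := by
              rw [Finset.sum_comm]
              exact Finset.sum_congr rfl fun σ' _ =>
                Finset.sum_congr rfl fun l _ => hrw l σ'
          _ ≤ ∑ σ' : Fin j → Fin d,
                (1 - c) * ((d : ℝ) * sqNorm (kaczIter A b τs x0 j σ' - xstar)) :=
              Finset.sum_le_sum fun σ' _ => hstep _ (ih1 σ')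
          _ = ((1 - c) * (d : ℝ)) *
                ∑ σ' : Fin j → Fin d, sqNorm (kaczIter A b τs x0 j σ' - xstar) := by
              rw [Finset.mul_sum]
              exact Finset.sum_congr rfl fun σ' _ => by ring
          _ ≤ ((1 - c) * (d : ℝ)) * (((1 - c) * (d : ℝ)) ^ j * sqNorm (x0 - xstar)) := by
              apply mul_le_mul_of_nonneg_left ih2
              exact mul_nonneg hfac (Nat.cast_nonneg d)
          _ = ((1 - c) * (d : ℝ)) ^ (j+1) * sqNorm (x0 - xstar) := by
              rw [pow_succ]; ring
  -- conclusion
  intro j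
  obtain ⟨_, hE⟩ := main j
  rcases Nat.eq_zero_or_pos d with hd0 | hdpos
  · subst hd0
    match j with
    | 0 =>
      simp only [pow_zero, one_mul, div_one]
      have hs : (∑ σ : Fin 0 → Fin 0, sqNorm (kaczIter A b τs x0 0 σ - xstar))
          = sqNorm (x0 - xstar) := by simp [kaczIter]
      rw [hs]
    | (j+1) =>
      haveI : IsEmpty (Fin (j+1) → Fin 0) := ⟨fun f => (f 0).elim0⟩
      rw [Finset.univ_eq_empty, Finset.sum_empty, zero_div]
      exact mul_nonneg (pow_nonneg hfac _) (sqNorm_nonneg _)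
  · have hdp : (0:ℝ) < ((d:ℕ) : ℝ) ^ j := pow_pos (by exact_mod_cast hdpos) j
    rw [div_le_iff₀ hdp]
    refine le_trans hE (le_of_eq ?_)
    rw [mul_pow]; ring


end
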